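/- Let p be a prime, k ∈ ℕ, a ∈ [p−1], and φ a linear character of P_{ap^k} (a Sylow p-subgroup of S_{ap^k}). Let g ∈ S_{ap^k} be a product of a disjoint p^k-cycles. Then the induced character value φ↑^{S_{ap^k}}(g) is nonzero. -/

import Mathlib

open scoped Classical
open Equiv

noncomputable section

/-- Induction of a function on a subgroup `P` of a finite group `G` to `G`. -/
def indC {G : Type*} [Group G] [Fintype G] (P : Subgroup G) (φ : P → ℂ) (g : G) : ℂ :=
  (Nat.card P : ℂ)⁻¹ * ∑ x : G, if h : x⁻¹ * g * x ∈ P then φ ⟨x⁻¹ * g * x, h⟩ else 0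

/-- for `a ∈ [p-1]`, a linear character `φ` of a Sylow `p`-subgroup of
`S_{ap^k}` and `g` a product of `a` disjoint `p^k`-cycles, `φ↑^{S_{ap^k}}(g) ≠ 0`. -/
theorem stmt6 (p a k : ℕ) (hp : p.Prime) (ha1 : 1 ≤ a) (ha2 : a ≤ p - 1) (hk : 1 ≤ k)
    (P : Sylow p (Perm (Fin (a * p ^ k))))
    (φ : ↥(P : Subgroup (Perm (Fin (a * p ^ k)))) →* ℂ)
    (g : Perm (Fin (a * p ^ k))) (hg : g.cycleType = Multiset.replicate a (p ^ k)) :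
    indC (P : Subgroup (Perm (Fin (a * p ^ k)))) (fun x => φ x) g ≠ 0 := by
  haveI : Fact p.Prime := ⟨hp⟩
  let H : Subgroup (Perm (Fin (a * p ^ k))) := (P : Subgroup (Perm (Fin (a * p ^ k))))
  have hHdef : H = (P : Subgroup (Perm (Fin (a * p ^ k)))) := rfl
  let f : Perm (Fin (a * p ^ k)) → ℂ :=
    fun x => if h : x⁻¹ * g * x ∈ H then φ ⟨x⁻¹ * g * x, h⟩ else 0
  have hfdef : f = fun x => if h : x⁻¹ * g * x ∈ H then φ ⟨x⁻¹ * g * x, h⟩ else 0 := rfl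
  -- the order of g divides p ^ k
  have hgpow : g ^ p ^ k = 1 := by
    rw [← orderOf_dvd_iff_pow_eq_one, ← Equiv.Perm.lcm_cycleType, hg]
    exact Multiset.lcm_dvd.mpr fun b hb => by rw [Multiset.eq_of_mem_replicate hb]
  -- f is constant on left cosets of H
  have hconj : ∀ (x u : Perm (Fin (a * p ^ k))), u ∈ H → f (x * u) = f x := by
    intro x u hu
    have key : (x * u)⁻¹ * g * (x * u) = u⁻¹ * (x⁻¹ * g * x) * u := by
      group
    have hmem : (x * u)⁻¹ * g * (x * u) ∈ H ↔ x⁻¹ * g * x ∈ H := by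
      rw [key]
      constructor
      · intro h
        have := H.mul_mem (H.mul_mem hu h) (H.inv_mem hu)
        convert this using 1
        group
      · intro h
        exact H.mul_mem (H.mul_mem (H.inv_mem hu) h) hu
    simp only [hfdef]
    by_cases h : x⁻¹ * g * x ∈ H
    · rw [dif_pos h, dif_pos (hmem.mpr h)]
      have : (⟨(x * u)⁻¹ * g * (x * u), hmem.mpr h⟩ : H)
          = ⟨u, hu⟩⁻¹ * ⟨x⁻¹ * g * x, h⟩ * ⟨u, hu⟩ := Subtype.ext (by simpa using key)
      rw [this, map_mul, map_mul, mul_right_comm, ← map_mul, inv_mul_cancel, map_one, one_mul]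
    · rw [dif_neg h, dif_neg (fun hc => h (hmem.mp hc))]
  have hfcoset : ∀ x : Perm (Fin (a * p ^ k)),
      f x = f (Quotient.out (QuotientGroup.mk (s := H) x)) := by
    intro x
    set y := Quotient.out (QuotientGroup.mk (s := H) x) with hy
    have h1 : (QuotientGroup.mk (s := H) y) = QuotientGroup.mk x := QuotientGroup.out_eq' _
    have hmem : y⁻¹ * x ∈ H := (QuotientGroup.eq).mp h1
    have h2 : x = y * (y⁻¹ * x) := by group
    rw [h2, hconj y _ hmem]
  -- fiber cardinalities over the quotient
  have hfiber : ∀ q : Perm (Fin (a * p ^ k)) ⧸ H,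
      (Finset.univ.filter fun x => (QuotientGroup.mk x : Perm (Fin (a * p ^ k)) ⧸ H) = q).card
        = Nat.card H := by
    intro q
    have h1 : Nat.card H = (Finset.univ.filter fun x => x ∈ H).card := by
      rw [Nat.card_eq_fintype_card]
      convert Fintype.card_subtype (fun x => x ∈ H)
    rw [h1]
    refine Finset.card_nbij' (fun x => q.out⁻¹ * x) (fun u => q.out * u) ?_ ?_ ?_ ?_
    · intro x hx
      have hx' : (QuotientGroup.mk x : Perm (Fin (a * p ^ k)) ⧸ H) = q :=
        (Finset.mem_filter.mp hx).2
      have : (QuotientGroup.mk (s := H) q.out) = QuotientGroup.mk x := by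
        rw [QuotientGroup.out_eq', hx']
      exact Finset.mem_filter.mpr ⟨Finset.mem_univ _, (QuotientGroup.eq).mp this⟩
    · intro u hu
      have hu' : u ∈ H := (Finset.mem_filter.mp hu).2
      refine Finset.mem_filter.mpr ⟨Finset.mem_univ _, ?_⟩
      have : (QuotientGroup.mk (s := H) q.out) = QuotientGroup.mk (q.out * u) :=
        (QuotientGroup.eq).mpr (by simpa using hu')
      rw [← this, QuotientGroup.out_eq']
    · intro x _; group
    · intro u _; group
  -- split the full sum along cosets
  have hS : (∑ x : Perm (Fin (a * p ^ k)), f x)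
      = (Nat.card H : ℂ) * ∑ q : Perm (Fin (a * p ^ k)) ⧸ H, f q.out := by
    rw [← Finset.sum_fiberwise_of_maps_to
      (g := fun x => (QuotientGroup.mk x : Perm (Fin (a * p ^ k)) ⧸ H))
      (fun x _ => Finset.mem_univ _) f, Finset.mul_sum]
    refine Finset.sum_congr rfl fun q _ => ?_
    have hcongr : ∀ x ∈ Finset.univ.filter
        (fun x => (QuotientGroup.mk x : Perm (Fin (a * p ^ k)) ⧸ H) = q), f x = f q.out := by
      intro x hx
      rw [hfcoset x, (Finset.mem_filter.mp hx).2]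
    rw [Finset.sum_congr rfl hcongr, Finset.sum_const, hfiber q, nsmul_eq_mul]
  -- the fixed cosets
  set s : Finset (Perm (Fin (a * p ^ k)) ⧸ H) := Finset.univ.filter (fun q => g • q = q)
    with hsdef
  have hfixmem : ∀ q : Perm (Fin (a * p ^ k)) ⧸ H,
      g • q = q ↔ q.out⁻¹ * g * q.out ∈ H := by
    intro q
    have h1 : (g • q = q) ↔ ((QuotientGroup.mk (g • q.out) : Perm (Fin (a * p ^ k)) ⧸ H)
        = QuotientGroup.mk q.out) := by
      rw [MulAction.Quotient.mk_smul_out H g q, QuotientGroup.out_eq' q]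
    rw [h1, QuotientGroup.eq, smul_eq_mul,
      show (g * q.out)⁻¹ * q.out = (q.out⁻¹ * g * q.out)⁻¹ by group, inv_mem_iff]
  -- restrict the quotient sum to fixed cosets
  have hT : (∑ q : Perm (Fin (a * p ^ k)) ⧸ H, f q.out) = ∑ q ∈ s, f q.out := by
    symm
    apply Finset.sum_subset (Finset.subset_univ s)
    intro q _ hq
    have hnot : ¬ (q.out⁻¹ * g * q.out ∈ H) := by
      intro hc
      exact hq (Finset.mem_filter.mpr ⟨Finset.mem_univ _, (hfixmem q).mpr hc⟩)
    simp only [hfdef]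
    rw [dif_neg hnot]
  -- values on fixed cosets are p^k-th roots of unity
  have hval : ∀ q ∈ s, (f q.out) ^ p ^ k = 1 := by
    intro q hq
    have hm : q.out⁻¹ * g * q.out ∈ H := (hfixmem q).mp (Finset.mem_filter.mp hq).2
    have h1 : (⟨q.out⁻¹ * g * q.out, hm⟩ : H) ^ p ^ k = 1 := by
      apply Subtype.ext
      rw [SubmonoidClass.coe_pow]
      have hc : (q.out⁻¹ * g * q.out) ^ p ^ k = q.out⁻¹ * g ^ p ^ k * q.out := by
        have := conj_pow (i := p ^ k) (a := q.out⁻¹) (b := g)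
        simpa [inv_inv] using this
      rw [hc, hgpow]
      simp
    simp only [hfdef]
    rw [dif_pos hm, ← map_pow, h1, map_one]
  -- primitive root
  have hpk0 : p ^ k ≠ 0 := pow_ne_zero _ hp.pos.ne'
  have hpkpos : 0 < p ^ k := Nat.pos_of_ne_zero hpk0
  haveI : NeZero (p ^ k) := ⟨hpk0⟩
  set μ : ℂ := Complex.exp (2 * Real.pi * Complex.I / (p ^ k : ℕ)) with hμdef
  have hprim : IsPrimitiveRoot μ (p ^ k) := Complex.isPrimitiveRoot_exp _ hpk0
  have hex : ∀ q : {q // q ∈ s}, ∃ i : ℕ, μ ^ i = f (q : Perm (Fin (a * p ^ k)) ⧸ H).out :=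
    fun q => by
      obtain ⟨i, _, hi⟩ := hprim.eq_pow_of_pow_eq_one (hval _ q.2)
      exact ⟨i, hi⟩
  choose e he using hex
  -- the key nonvanishing
  have hTne : (∑ q ∈ s, f q.out) ≠ 0 := by
    intro htot
    -- build the integer polynomial
    set Qp : Polynomial ℤ := ∑ q ∈ s.attach, Polynomial.X ^ e q with hQp
    have haeval : Polynomial.aeval μ Qp = 0 := by
      rw [hQp, map_sum]
      have : ∀ q ∈ s.attach, Polynomial.aeval μ (Polynomial.X ^ e q : Polynomial ℤ)
          = f (q : Perm (Fin (a * p ^ k)) ⧸ H).out := by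
        intro q _
        rw [map_pow, Polynomial.aeval_X, he q]
      rw [Finset.sum_congr rfl this, Finset.sum_attach s (fun q => f q.out), htot]
    have heval1 : Polynomial.eval 1 Qp = s.card := by
      rw [hQp, Polynomial.eval_finset_sum]
      simp [Finset.card_attach]
    have hdvd : Polynomial.cyclotomic (p ^ k) ℤ ∣ Qp := by
      rw [Polynomial.cyclotomic_eq_minpoly hprim hpkpos]
      exact minpoly.isIntegrallyClosed_dvd (hprim.isIntegral hpkpos) haeval
    obtain ⟨R, hR⟩ := hdvd
    have hev := congrArg (Polynomial.eval 1) hR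
    rw [Polynomial.eval_mul, heval1] at hev
    have hk1 : p ^ k = p ^ ((k - 1) + 1) := by rw [Nat.sub_add_cancel hk]
    have hcyc : Polynomial.eval 1 (Polynomial.cyclotomic (p ^ k) ℤ) = p := by
      conv_lhs => rw [hk1]
      exact Polynomial.eval_one_cyclotomic_prime_pow _
    rw [hcyc] at hev
    have hpdvd : (p : ℤ) ∣ (s.card : ℤ) := ⟨Polynomial.eval 1 R, hev⟩
    have hpcard : p ∣ s.card := Int.ofNat_dvd.mp hpdvd
    -- but the number of fixed cosets is congruent to the index mod p
    have hpg : IsPGroup p (Subgroup.zpowers g) := by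
      intro x
      obtain ⟨m, hm⟩ := Subgroup.mem_zpowers_iff.mp x.2
      refine ⟨k, ?_⟩
      apply Subtype.ext
      have hxp : ((x : Perm (Fin (a * p ^ k))) : Perm (Fin (a * p ^ k))) ^ (p ^ k) = 1 := by
        rw [← hm, ← zpow_natCast, ← zpow_mul,
          show m * ((p ^ k : ℕ) : ℤ) = ((p ^ k : ℕ) : ℤ) * m from mul_comm _ _,
          zpow_mul, zpow_natCast, hgpow, one_zpow]
      simpa using hxp
    have hmod := hpg.card_modEq_card_fixedPoints (Perm (Fin (a * p ^ k)) ⧸ H)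
    have hsetfix : MulAction.fixedPoints (Subgroup.zpowers g) (Perm (Fin (a * p ^ k)) ⧸ H)
        = {q | g • q = q} := by
      ext q
      simp only [MulAction.mem_fixedPoints, Set.mem_setOf_eq]
      constructor
      · intro h
        exact h ⟨g, Subgroup.mem_zpowers g⟩
      · intro h x
        have hle : Subgroup.zpowers g ≤ MulAction.stabilizer (Perm (Fin (a * p ^ k))) q :=
          Subgroup.zpowers_le.mpr (MulAction.mem_stabilizer_iff.mpr h)
        have := hle x.2
        rw [MulAction.mem_stabilizer_iff] at this
        exact this
    have hfixcard :
        Nat.card (MulAction.fixedPoints (Subgroup.zpowers g) (Perm (Fin (a * p ^ k)) ⧸ H))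
          = s.card := by
      have h3 : MulAction.fixedPoints (Subgroup.zpowers g) (Perm (Fin (a * p ^ k)) ⧸ H)
          = (s : Set (Perm (Fin (a * p ^ k)) ⧸ H)) := by
        rw [hsetfix]
        ext q
        simp [hsdef]
      rw [h3]
      simp [Nat.card_eq_fintype_card]
    rw [hfixcard] at hmod
    have hindex : ¬ p ∣ Nat.card (Perm (Fin (a * p ^ k)) ⧸ H) := by
      have h2 := P.not_dvd_index
      rwa [Subgroup.index_eq_card] at h2
    exact hindex ((Nat.modEq_zero_iff_dvd.mp
      (hmod.trans (Nat.modEq_zero_iff_dvd.mpr hpcard))))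
  -- conclude
  have hcardH : (Nat.card H : ℂ) ≠ 0 := by
    exact_mod_cast Nat.card_pos.ne'
  have hrfl : indC (P : Subgroup (Perm (Fin (a * p ^ k)))) (fun x => φ x) g
      = (Nat.card H : ℂ)⁻¹ * (∑ x : Perm (Fin (a * p ^ k)), f x) := rfl
  rw [hrfl, hS, hT]
  exact mul_ne_zero (inv_ne_zero hcardH) (mul_ne_zero hcardH hTne)

end
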